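/- Let K ≥ 1, let α_1,…,α_K ≥ 0 with Σ_k α_k = 1, and for each k let F_k : ℝ → ℝ be nondecreasing with values in [0,1] and with F_k(p) < 1 for every p ≥ 0 (so every segment has unbounded support ℝ₊). Suppose, with c = 0, each profit function π_k(p) = p·(1 − F_k(p)) is concave on [0, ∞). Then there is no gap between uniform pricing and third-degree price discrimination: sup_{p ≥ 0} Σ_k α_k·π_k(p) = Σ_k α_k·(sup_{p ≥ 0} π_k(p)), where both sides may equal +∞. -/

import Mathlib

private lemma ereal_coe_fsum {ι : Type*} (s : Finset ι) (f : ι → ℝ) :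
    ((∑ i ∈ s, f i : ℝ) : EReal) = ∑ i ∈ s, ((f i : ℝ) : EReal) := by
  induction s using Finset.cons_induction with
  | empty => simp
  | cons a s ha ih => rw [Finset.sum_cons, Finset.sum_cons, EReal.coe_add, ih]

private lemma mono_of_concave {f : ℝ → ℝ} (hc : ConcaveOn ℝ (Set.Ici 0) f)
    (hnn : ∀ p : ℝ, 0 ≤ p → 0 ≤ f p) : MonotoneOn f (Set.Ici 0) := by
  intro a ha b hb hab
  by_contra hlt
  push_neg at hlt
  have ha' : (0:ℝ) ≤ a := ha
  have hb' : (0:ℝ) ≤ b := hb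
  have hfb : 0 ≤ f b := hnn b hb'
  have hfa0 : 0 < f a := lt_of_le_of_lt hfb hlt
  obtain ⟨d, hd⟩ : ∃ d : ℝ, d = f a - f b := ⟨_, rfl⟩
  have hd0 : 0 < d := by simp only [hd]; linarith
  have hab' : a < b := by
    rcases lt_or_eq_of_le hab with h | h
    · exact h
    · exact absurd hlt (by rw [h]; exact lt_irrefl _)
  have hden : 0 < f a + d := by linarith
  obtain ⟨ν, hν⟩ : ∃ ν : ℝ, ν = d / (f a + d) := ⟨_, rfl⟩
  have hν0 : 0 < ν := hν ▸ div_pos hd0 hden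
  have hν1 : ν < 1 := by rw [hν, div_lt_one hden]; linarith
  obtain ⟨t, ht⟩ : ∃ t : ℝ, t = a + (b - a) / ν := ⟨_, rfl⟩
  have htb : b ≤ t := by
    have h1 : b - a ≤ (b - a) / ν := by
      rw [le_div_iff₀ hν0]; nlinarith [sub_pos.2 hab']
    linarith
  have ht0 : (0:ℝ) ≤ t := by linarith
  have hcomb : (1 - ν) * a + ν * t = b := by
    rw [ht]; field_simp; ring
  have hcv := hc.2 (Set.mem_Ici.2 ha') (Set.mem_Ici.2 ht0)
    (by linarith : (0:ℝ) ≤ 1 - ν) hν0.le (by ring)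
  rw [smul_eq_mul, smul_eq_mul, smul_eq_mul, smul_eq_mul, hcomb] at hcv
  have hft : 0 ≤ f t := hnn t ht0
  have key : (1 - ν) * f a ≤ f b := by nlinarith
  have hfb' : f b = f a - d := by rw [hd]; ring
  rw [hν, hfb'] at key
  have h3 : (1 - d / (f a + d)) * f a = f a * f a / (f a + d) := by field_simp; ring
  rw [h3] at key
  have key2 := (div_le_iff₀ hden).1 key
  nlinarith [key2, sq_nonneg d]

theorem zero_gap_unbounded_support
    (K : ℕ) (hK : 1 ≤ K) (α : Fin K → ℝ) (hα : ∀ k, 0 ≤ α k)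
    (hsum : ∑ k, α k = 1)
    (F : Fin K → ℝ → ℝ) (hFmono : ∀ k, Monotone (F k))
    (hF0 : ∀ k p, 0 ≤ F k p) (hF1 : ∀ k p, F k p ≤ 1)
    (hFlt : ∀ k, ∀ p : ℝ, 0 ≤ p → F k p < 1)
    (π : Fin K → ℝ → ℝ) (hπ : ∀ k p, π k p = p * (1 - F k p))
    (hconc : ∀ k, ConcaveOn ℝ (Set.Ici 0) (π k)) :
    (⨆ p : Set.Ici (0:ℝ), ((∑ k, α k * π k ↑p : ℝ) : EReal))
      = ∑ k, ((α k : ℝ) : EReal) * ⨆ p : Set.Ici (0:ℝ), ((π k ↑p : ℝ) : EReal) := by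
  haveI hKne : Nonempty (Fin K) := ⟨⟨0, hK⟩⟩
  -- nonnegativity of π
  have hπnn : ∀ k (p : ℝ), 0 ≤ p → 0 ≤ π k p := by
    intro k p hp
    rw [hπ]
    exact mul_nonneg hp (by linarith [hF1 k p])
  have hπ0 : ∀ k, π k 0 = 0 := by intro k; rw [hπ]; ring
  have hmono : ∀ k, MonotoneOn (π k) (Set.Ici 0) :=
    fun k => mono_of_concave (hconc k) (hπnn k)
  set S : Fin K → EReal := fun k => ⨆ p : Set.Ici (0:ℝ), ((π k ↑p : ℝ) : EReal) with hS
  have hzero : (⟨0, Set.mem_Ici.2 le_rfl⟩ : Set.Ici (0:ℝ)) ∈ Set.univ := Set.mem_univ _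
  have hSnn : ∀ k, (0:EReal) ≤ S k := by
    intro k
    have := le_iSup (fun p : Set.Ici (0:ℝ) => ((π k ↑p : ℝ) : EReal)) ⟨0, Set.mem_Ici.2 le_rfl⟩
    simpa [hπ0 k] using this
  -- easy direction ≤
  apply le_antisymm
  · apply iSup_le
    intro p
    rw [ereal_coe_fsum]
    apply Finset.sum_le_sum
    intro k _
    rw [EReal.coe_mul]
    exact mul_le_mul_of_nonneg_left
      (le_iSup (fun q : Set.Ici (0:ℝ) => ((π k ↑q : ℝ) : EReal)) p)
      (by exact_mod_cast hα k)
  -- hard direction ≥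
  by_cases htop : ∃ k, 0 < α k ∧ S k = ⊤
  · -- both sides are ⊤
    obtain ⟨k₀, hk₀, hSk₀⟩ := htop
    have hlhs : (⨆ p : Set.Ici (0:ℝ), ((∑ k, α k * π k ↑p : ℝ) : EReal)) = ⊤ := by
      rw [EReal.eq_top_iff_forall_lt]
      intro z
      have h1 : ((z / α k₀ : ℝ) : EReal) < S k₀ := by rw [hSk₀]; exact EReal.coe_lt_top _
      rw [hS, lt_iSup_iff] at h1
      obtain ⟨p, hp⟩ := h1
      have hp' : z / α k₀ < π k₀ ↑p := by exact_mod_cast hp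
      have hz : z < α k₀ * π k₀ ↑p := by
        have := (div_lt_iff₀ hk₀).1 hp'
        nlinarith
      have hle : α k₀ * π k₀ ↑p ≤ ∑ k, α k * π k ↑p :=
        Finset.single_le_sum (fun j _ => mul_nonneg (hα j) (hπnn j ↑p p.2))
          (Finset.mem_univ k₀)
      calc (z : EReal) < ((∑ k, α k * π k ↑p : ℝ) : EReal) := by
            exact_mod_cast lt_of_lt_of_le hz hle
        _ ≤ _ := le_iSup (fun q : Set.Ici (0:ℝ) => ((∑ k, α k * π k ↑q : ℝ) : EReal)) p
    rw [hlhs]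
    exact le_top
  · push_neg at htop
    have hK0 : (0:ℝ) < K := by exact_mod_cast hK
    set A : Fin K → ℝ := fun k => (S k).toReal with hA
    have hSbot : ∀ k, S k ≠ ⊥ := fun k =>
      (lt_of_lt_of_le (by simp : (⊥ : EReal) < 0) (hSnn k)).ne'
    have hScoe : ∀ k, 0 < α k → S k = ((A k : ℝ) : EReal) := fun k hk =>
      (EReal.coe_toReal (htop k hk) (hSbot k)).symm
    have hterm : ∀ k, ((α k : ℝ) : EReal) * S k = ((α k * A k : ℝ) : EReal) := by
      intro k
      rcases eq_or_lt_of_le (hα k) with h0 | hpos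
      · rw [← h0]; simp
      · rw [hScoe k hpos, ← EReal.coe_mul]
    calc ∑ k, ((α k : ℝ) : EReal) * S k
        = ((∑ k, α k * A k : ℝ) : EReal) := by
          rw [ereal_coe_fsum]; exact Finset.sum_congr rfl (fun k _ => hterm k)
      _ ≤ _ := by
          rw [← EReal.ge_of_forall_gt_iff_ge]
          intro z hz
          have hz' : z < ∑ k, α k * A k := by exact_mod_cast hz
          obtain ⟨ε, hε⟩ : ∃ ε : ℝ, ε = (∑ k, α k * A k) - z := ⟨_, rfl⟩
          have hε0 : 0 < ε := by rw [hε]; linarith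
          have hchoice : ∀ k, ∃ p : Set.Ici (0:ℝ),
              α k * A k - ε / K < α k * π k ↑p := by
            intro k
            rcases eq_or_lt_of_le (hα k) with h0 | hpos
            · refine ⟨⟨0, Set.mem_Ici.2 le_rfl⟩, ?_⟩
              rw [← h0]
              simp only [zero_mul, zero_sub]
              have : 0 < ε / K := div_pos hε0 hK0
              linarith
            · have hlt : ((A k - ε / (K * α k) : ℝ) : EReal) < S k := by
                rw [hScoe k hpos, EReal.coe_lt_coe_iff]
                have : 0 < ε / (K * α k) := div_pos hε0 (by positivity)
                linarith
              rw [hS, lt_iSup_iff] at hlt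
              obtain ⟨p, hp⟩ := hlt
              have hp' : A k - ε / (K * α k) < π k ↑p := by exact_mod_cast hp
              refine ⟨p, ?_⟩
              have heq : α k * (A k - ε / (K * α k)) = α k * A k - ε / K := by
                field_simp
              have := mul_lt_mul_of_pos_left hp' hpos
              linarith [heq ▸ this]
          choose P hP using hchoice
          obtain ⟨Q, hQ⟩ : ∃ Q : ℝ, Q = Finset.univ.sup' Finset.univ_nonempty
              (fun k => (P k : ℝ)) := ⟨_, rfl⟩
          have hQ0 : (0:ℝ) ≤ Q := by
            refine le_trans (P ⟨0, hK⟩).2 ?_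
            rw [hQ]
            exact Finset.le_sup' (fun j : Fin K => (P j : ℝ)) (Finset.mem_univ _)
          have hPQ : ∀ k, (P k : ℝ) ≤ Q := fun k => by
            rw [hQ]; exact Finset.le_sup' (fun j : Fin K => (P j : ℝ)) (Finset.mem_univ _)
          have hstep : ∀ k, α k * A k - ε / K < α k * π k Q := by
            intro k
            refine lt_of_lt_of_le (hP k) ?_
            exact mul_le_mul_of_nonneg_left
              (hmono k (P k).2 (Set.mem_Ici.2 hQ0) (hPQ k)) (hα k)
          have hsum_lt : z < ∑ k, α k * π k Q := by
            have h1 : ∑ k, (α k * A k - ε / K) < ∑ k, α k * π k Q :=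
              Finset.sum_lt_sum_of_nonempty Finset.univ_nonempty
                (fun k _ => hstep k)
            have h2 : ∑ k, (α k * A k - ε / K) = (∑ k, α k * A k) - ε := by
              rw [Finset.sum_sub_distrib, Finset.sum_const, Finset.card_univ,
                Fintype.card_fin, nsmul_eq_mul]
              field_simp
            rw [h2, hε] at h1
            linarith
          calc (z : EReal) ≤ ((∑ k, α k * π k Q : ℝ) : EReal) := by
                exact_mod_cast hsum_lt.le
            _ ≤ _ := le_iSup (fun q : Set.Ici (0:ℝ) =>
                ((∑ k, α k * π k ↑q : ℝ) : EReal)) ⟨Q, Set.mem_Ici.2 hQ0⟩
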